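/- Let C be a ℤ-submodule of (ℤ/2ℤ)^n with dual code C^⊥ = {y ∈ (ℤ/2ℤ)^n : ∑ᵢ yᵢxᵢ = 0 for all x ∈ C}. Then for every real q with 0 ≤ q < 1, ∑_{x ∈ Λ_A(C^⊥)} q^{‖x‖₁} = (1/|C|) · ∑_{c ∈ C} ((1+q)/(1−q))^{n − |c|} ((1−q)/(1+q))^{|c|}, where |c| = #{i : cᵢ ≠ 0} is the Hamming weight of c. -/

import Mathlib

open Finset

namespace Theta1Aux



/-- sign character on `ZMod 2`, real-valued -/
noncomputable def χ (a : ZMod 2) : ℝ := if a = 0 then 1 else -1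

lemma zmod2_cases : ∀ a : ZMod 2, a = 0 ∨ a = 1 := by decide

lemma χ_zero : χ 0 = 1 := by simp [χ]

lemma χ_add (a b : ZMod 2) : χ (a + b) = χ a * χ b := by
  rcases zmod2_cases a with ha | ha <;> rcases zmod2_cases b with hb | hb <;>
    subst ha <;> subst hb <;> norm_num [χ] <;> decide

lemma χ_add_one (a : ZMod 2) : χ (a + 1) = - χ a := by
  rcases zmod2_cases a with ha | ha <;> subst ha <;> norm_num [χ] <;> decide

lemma χ_sum {ι : Type*} (s : Finset ι) (f : ι → ZMod 2) :
    χ (∑ i ∈ s, f i) = ∏ i ∈ s, χ (f i) := by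
  induction s using Finset.cons_induction with
  | empty => simp [χ_zero]
  | cons i s hi ih => rw [Finset.sum_cons, Finset.prod_cons, χ_add, ih]

/-- tsum over a pi type of a product equals product of tsums (in `ℝ≥0∞`). -/
lemma tsum_pi_prod : ∀ (n : ℕ) (f : Fin n → ℤ → ENNReal),
    ∑' x : Fin n → ℤ, ∏ i, f i (x i) = ∏ i, ∑' m : ℤ, f i m := by
  intro n
  induction n with
  | zero =>
      intro f
      simp [tsum_fintype]
  | succ n ih =>
      intro f
      set e := Fin.consEquiv (fun _ : Fin (n + 1) => ℤ) with he
      rw [← e.tsum_eq]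
      have key : ∀ p : ℤ × (Fin n → ℤ),
          (∏ i, f i (e p i)) = f 0 p.1 * ∏ i : Fin n, f i.succ (p.2 i) := by
        rintro ⟨m, x⟩
        rw [Fin.prod_univ_succ]
        simp [he, Fin.consEquiv, Fin.cons_zero, Fin.cons_succ]
      calc ∑' p : ℤ × (Fin n → ℤ), ∏ i, f i (e p i)
          = ∑' (m : ℤ) (x : Fin n → ℤ), f 0 m * ∏ i : Fin n, f i.succ (x i) := by
            rw [← ENNReal.tsum_prod]; exact tsum_congr key
        _ = ∑' (m : ℤ), f 0 m * ∑' x : Fin n → ℤ, ∏ i : Fin n, f i.succ (x i) := by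
            congr 1; ext m; rw [ENNReal.tsum_mul_left]
        _ = (∑' m : ℤ, f 0 m) * ∏ i : Fin n, ∑' m : ℤ, f i.succ m := by
            rw [ENNReal.tsum_mul_right, ih]
        _ = ∏ i, ∑' m : ℤ, f i m := by rw [Fin.prod_univ_succ]


open Classical in
lemma orth (n : ℕ) (C : Submodule ℤ (Fin n → ZMod 2)) [Fintype C]
    (y : Fin n → ZMod 2) :
    ∑ c : C, χ (∑ i, y i * (c : Fin n → ZMod 2) i)
      = if (∀ z ∈ C, ∑ i, y i * z i = 0) then (Nat.card C : ℝ) else 0 := by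
  classical
  by_cases h : ∀ z ∈ C, ∑ i, y i * z i = 0
  · rw [if_pos h]
    have h1 : ∀ c : C, χ (∑ i, y i * (c : Fin n → ZMod 2) i) = 1 := by
      intro c; rw [h c c.2, χ_zero]
    simp only [h1, Finset.sum_const, Finset.card_univ, nsmul_eq_mul, mul_one]
    rw [Nat.card_eq_fintype_card]
  · rw [if_neg h]
    push_neg at h
    obtain ⟨z0, hz0, hz0'⟩ := h
    have hz1 : ∑ i, y i * z0 i = 1 := by
      rcases zmod2_cases (∑ i, y i * z0 i) with h' | h'
      · exact absurd h' hz0'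
      · exact h'
    set T := ∑ c : C, χ (∑ i, y i * (c : Fin n → ZMod 2) i) with hT
    have key : T = -T := by
      have := Equiv.sum_comp (Equiv.addRight (⟨z0, hz0⟩ : C))
        (fun c : C => χ (∑ i, y i * (c : Fin n → ZMod 2) i))
      rw [hT]
      nth_rewrite 1 [← this]
      rw [← Finset.sum_neg_distrib]
      refine Finset.sum_congr rfl fun c _ => ?_
      have hcoe : ∀ i, ((Equiv.addRight (⟨z0, hz0⟩ : C) c : C) : Fin n → ZMod 2) i
          = (c : Fin n → ZMod 2) i + z0 i := by
        intro i; simp [Equiv.addRight]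
      have hsum : (∑ i, y i * ((Equiv.addRight (⟨z0, hz0⟩ : C) c : C) : Fin n → ZMod 2) i)
          = (∑ i, y i * (c : Fin n → ZMod 2) i) + 1 := by
        simp only [hcoe, mul_add, Finset.sum_add_distrib, hz1]
      rw [hsum, χ_add_one]
    linarith

open Classical in
lemma macwilliams (n : ℕ) (C : Submodule ℤ (Fin n → ZMod 2)) [Fintype C] (a b : ℝ) :
    (Nat.card C : ℝ) *
      ∑ y ∈ Finset.univ.filter
          (fun y : Fin n → ZMod 2 => ∀ z ∈ C, ∑ i, y i * z i = 0),
        ∏ i, (if y i = 0 then a else b)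
    = ∑ c : C, (a + b) ^ (n - (Finset.univ.filter
          fun i => (c : Fin n → ZMod 2) i ≠ 0).card)
        * (a - b) ^ (Finset.univ.filter
          fun i => (c : Fin n → ZMod 2) i ≠ 0).card := by
  classical
  -- rewrite each RHS term as a product over coordinates
  have step1 : ∀ c : C, (a + b) ^ (n - (Finset.univ.filter
          fun i => (c : Fin n → ZMod 2) i ≠ 0).card)
        * (a - b) ^ (Finset.univ.filter
          fun i => (c : Fin n → ZMod 2) i ≠ 0).card
      = ∏ i, (a + χ ((c : Fin n → ZMod 2) i) * b) := by
    intro c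
    rw [← Finset.prod_filter_mul_prod_filter_not Finset.univ
      (fun i => (c : Fin n → ZMod 2) i = 0)]
    have e1 : ∏ i ∈ Finset.univ.filter (fun i => (c : Fin n → ZMod 2) i = 0),
        (a + χ ((c : Fin n → ZMod 2) i) * b) = (a + b) ^ (Finset.univ.filter
          (fun i => (c : Fin n → ZMod 2) i = 0)).card := by
      rw [Finset.prod_congr rfl (fun i hi => ?_), Finset.prod_const]
      rw [Finset.mem_filter] at hi
      rw [hi.2, χ_zero, one_mul]
    have e2 : ∏ i ∈ Finset.univ.filter (fun i => ¬ (c : Fin n → ZMod 2) i = 0),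
        (a + χ ((c : Fin n → ZMod 2) i) * b) = (a - b) ^ (Finset.univ.filter
          (fun i => (c : Fin n → ZMod 2) i ≠ 0)).card := by
      rw [Finset.prod_congr rfl (fun i hi => ?_), Finset.prod_const]
      rw [Finset.mem_filter] at hi
      rw [χ, if_neg hi.2]; ring
    have hcard : (Finset.univ.filter (fun i => (c : Fin n → ZMod 2) i = 0)).card
        = n - (Finset.univ.filter (fun i => (c : Fin n → ZMod 2) i ≠ 0)).card := by
      have := Finset.card_filter_add_card_filter_not
        (s := (Finset.univ : Finset (Fin n)))
        (p := fun i => (c : Fin n → ZMod 2) i = 0)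
      simp only [Finset.card_univ, Fintype.card_fin] at this
      simp only [ne_eq]
      omega
    rw [e1, e2, hcard]
  rw [Finset.sum_congr rfl (fun c _ => step1 c)]
  -- expand each product as a sum over all y
  have step2 : ∀ c : C, ∏ i, (a + χ ((c : Fin n → ZMod 2) i) * b)
      = ∑ y : Fin n → ZMod 2,
          χ (∑ i, y i * (c : Fin n → ZMod 2) i) * ∏ i, (if y i = 0 then a else b) := by
    intro c
    have hrow : ∀ i : Fin n, a + χ ((c : Fin n → ZMod 2) i) * b
        = ∑ r : ZMod 2, χ (r * (c : Fin n → ZMod 2) i) * (if r = 0 then a else b) := by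
      intro i
      have : (Finset.univ : Finset (ZMod 2)) = {0, 1} := by decide
      rw [this, Finset.sum_insert (by decide), Finset.sum_singleton]
      simp [χ_zero, χ]
    rw [Finset.prod_congr rfl (fun i _ => hrow i), Fintype.prod_sum]
    refine Finset.sum_congr rfl fun y _ => ?_
    rw [χ_sum, ← Finset.prod_mul_distrib]
  rw [Finset.sum_congr rfl (fun c _ => step2 c)]
  rw [Finset.sum_comm]
  have step3 : ∀ y : Fin n → ZMod 2,
      ∑ c : C, χ (∑ i, y i * (c : Fin n → ZMod 2) i) * ∏ i, (if y i = 0 then a else b)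
      = (if (∀ z ∈ C, ∑ i, y i * z i = 0) then (Nat.card C : ℝ) else 0)
          * ∏ i, (if y i = 0 then a else b) := by
    intro y
    rw [← Finset.sum_mul, orth]
  rw [Finset.sum_congr rfl (fun y _ => step3 y)]
  rw [Finset.mul_sum, Finset.sum_filter]
  refine Finset.sum_congr rfl fun y _ => ?_
  by_cases h : ∀ z ∈ C, ∑ i, y i * z i = 0
  · simp [h]
  · simp [h]




noncomputable def gr (q : ℝ) (r : ZMod 2) : ℤ → ℝ :=
  fun m => if ((m : ZMod 2) = r) then q ^ m.natAbs else 0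

variable {q : ℝ}

lemma gr_nonneg (hq0 : 0 ≤ q) (r : ZMod 2) (m : ℤ) : 0 ≤ gr q r m := by
  unfold gr; split <;> positivity

lemma gr_nat (r : ZMod 2) (n : ℕ) :
    gr q r (n : ℤ) = if ((n : ZMod 2) = r) then q ^ n else 0 := by
  simp [gr]

lemma gr_negsucc (r : ZMod 2) (n : ℕ) :
    gr q r (-((n : ℤ) + 1)) = if ((n : ZMod 2) = r + 1) then q ^ (n + 1) else 0 := by
  have hneg : ∀ x : ZMod 2, -x = x := by decide
  have h1 : ((-((n : ℤ) + 1) : ℤ) : ZMod 2) = (n : ZMod 2) + 1 := by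
    push_cast
    exact hneg _
  have h2 : (-((n : ℤ) + 1)).natAbs = n + 1 := by omega
  have h3 : ((n : ZMod 2) + 1 = r) ↔ ((n : ZMod 2) = r + 1) := by
    have haux : ∀ x : ZMod 2, x + 1 + 1 = x := by decide
    constructor
    · intro h; rw [← h, haux]
    · intro h; rw [h, haux]
  rw [gr, h1, h2, if_congr h3 rfl rfl]

lemma natCast_zmod2_eq_zero_iff (n : ℕ) : ((n : ZMod 2) = 0) ↔ Even n := by
  rw [ZMod.natCast_eq_zero_iff]
  exact even_iff_two_dvd.symm

lemma natCast_zmod2_eq_one_iff (n : ℕ) : ((n : ZMod 2) = 1) ↔ Odd n := by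
  rw [← Nat.not_even_iff_odd, ← natCast_zmod2_eq_zero_iff]
  rcases zmod2_cases (n : ZMod 2) with h | h <;> rw [h] <;> simp

lemma nat_ite_zero (n : ℕ) :
    (if ((n : ZMod 2) = 0) then q ^ n else (0 : ℝ)) = (q ^ n + (-q) ^ n) / 2 := by
  rcases Nat.even_or_odd n with he | ho
  · rw [if_pos ((natCast_zmod2_eq_zero_iff n).mpr he), he.neg_pow]; ring
  · rw [if_neg (by rw [natCast_zmod2_eq_zero_iff]; exact Nat.not_even_iff_odd.mpr ho),
      ho.neg_pow]
    ring

lemma nat_ite_one (n : ℕ) :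
    (if ((n : ZMod 2) = 1) then q ^ n else (0 : ℝ)) = (q ^ n - (-q) ^ n) / 2 := by
  rcases Nat.even_or_odd n with he | ho
  · rw [if_neg (by rw [natCast_zmod2_eq_one_iff]; exact Nat.not_odd_iff_even.mpr he),
      he.neg_pow]
    ring
  · rw [if_pos ((natCast_zmod2_eq_one_iff n).mpr ho), ho.neg_pow]; ring

section
variable (hq0 : 0 ≤ q) (hq1 : q < 1)
include hq0 hq1

lemma summable_geo : Summable (fun n : ℕ => q ^ n) :=
  summable_geometric_of_lt_one hq0 hq1

lemma summable_geo' : Summable (fun n : ℕ => (-q) ^ n) := by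
  apply summable_geometric_of_norm_lt_one
  rw [norm_neg, Real.norm_eq_abs, abs_of_nonneg hq0]
  exact hq1

lemma tsum_geo' : ∑' n : ℕ, (-q) ^ n = (1 + q)⁻¹ := by
  rw [tsum_geometric_of_norm_lt_one
    (by rw [norm_neg, Real.norm_eq_abs, abs_of_nonneg hq0]; exact hq1)]
  rw [sub_neg_eq_add]

lemma summable_gr (r : ZMod 2) : Summable (gr q r) := by
  apply Summable.of_nat_of_neg_add_one
  · apply Summable.of_nonneg_of_le (fun n => gr_nonneg hq0 r _)
      (fun n => ?_) (summable_geo hq0 hq1)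
    rw [gr_nat]
    split
    · exact le_refl _
    · positivity
  · apply Summable.of_nonneg_of_le (fun n => gr_nonneg hq0 r _)
      (fun n => ?_) ((summable_geo hq0 hq1).mul_left q)
    rw [gr_negsucc]
    split
    · rw [pow_succ, mul_comm]
    · positivity

lemma tsum_gr_zero : ∑' m : ℤ, gr q 0 m
    = ((1 - q)⁻¹ + (1 + q)⁻¹) / 2 + q * (((1 - q)⁻¹ - (1 + q)⁻¹) / 2) := by
  have hs0 : Summable (fun n : ℕ => (q ^ n + (-q) ^ n) / 2) :=
    ((summable_geo hq0 hq1).add (summable_geo' hq0 hq1)).div_const 2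
  have hs1 : Summable (fun n : ℕ => q * ((q ^ n - (-q) ^ n) / 2)) :=
    (((summable_geo hq0 hq1).sub (summable_geo' hq0 hq1)).div_const 2).mul_left q
  have e0 : (fun n : ℕ => gr q 0 (n : ℤ)) = fun n : ℕ => (q ^ n + (-q) ^ n) / 2 := by
    funext n; rw [gr_nat, nat_ite_zero]
  have e1 : (fun n : ℕ => gr q 0 (-((n : ℤ) + 1)))
      = fun n : ℕ => q * ((q ^ n - (-q) ^ n) / 2) := by
    funext n
    rw [gr_negsucc, zero_add, ← nat_ite_one, pow_succ]
    split <;> ring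
  rw [tsum_of_nat_of_neg_add_one (by rw [e0]; exact hs0) (by rw [e1]; exact hs1)]
  rw [e0, e1]
  rw [tsum_div_const, Summable.tsum_add (summable_geo hq0 hq1) (summable_geo' hq0 hq1),
    tsum_geometric_of_lt_one hq0 hq1, tsum_geo' hq0 hq1]
  rw [tsum_mul_left, tsum_div_const,
    Summable.tsum_sub (summable_geo hq0 hq1) (summable_geo' hq0 hq1),
    tsum_geometric_of_lt_one hq0 hq1, tsum_geo' hq0 hq1]

lemma tsum_gr_one : ∑' m : ℤ, gr q 1 m
    = ((1 - q)⁻¹ - (1 + q)⁻¹) / 2 + q * (((1 - q)⁻¹ + (1 + q)⁻¹) / 2) := by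
  have hs0 : Summable (fun n : ℕ => (q ^ n - (-q) ^ n) / 2) :=
    ((summable_geo hq0 hq1).sub (summable_geo' hq0 hq1)).div_const 2
  have hs1 : Summable (fun n : ℕ => q * ((q ^ n + (-q) ^ n) / 2)) :=
    (((summable_geo hq0 hq1).add (summable_geo' hq0 hq1)).div_const 2).mul_left q
  have e0 : (fun n : ℕ => gr q 1 (n : ℤ)) = fun n : ℕ => (q ^ n - (-q) ^ n) / 2 := by
    funext n; rw [gr_nat, nat_ite_one]
  have e1 : (fun n : ℕ => gr q 1 (-((n : ℤ) + 1)))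
      = fun n : ℕ => q * ((q ^ n + (-q) ^ n) / 2) := by
    funext n
    have : (1 : ZMod 2) + 1 = 0 := by decide
    rw [gr_negsucc, this, ← nat_ite_zero, pow_succ]
    split <;> ring
  rw [tsum_of_nat_of_neg_add_one (by rw [e0]; exact hs0) (by rw [e1]; exact hs1)]
  rw [e0, e1]
  rw [tsum_div_const, Summable.tsum_sub (summable_geo hq0 hq1) (summable_geo' hq0 hq1),
    tsum_geometric_of_lt_one hq0 hq1, tsum_geo' hq0 hq1]
  rw [tsum_mul_left, tsum_div_const,
    Summable.tsum_add (summable_geo hq0 hq1) (summable_geo' hq0 hq1),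
    tsum_geometric_of_lt_one hq0 hq1, tsum_geo' hq0 hq1]

lemma tsum_gr_add :
    (∑' m : ℤ, gr q 0 m) + (∑' m : ℤ, gr q 1 m) = (1 + q) / (1 - q) := by
  rw [tsum_gr_zero hq0 hq1, tsum_gr_one hq0 hq1]
  have h1 : (1 : ℝ) - q ≠ 0 := by linarith
  have h2 : (1 : ℝ) + q ≠ 0 := by linarith
  field_simp
  ring

lemma tsum_gr_sub :
    (∑' m : ℤ, gr q 0 m) - (∑' m : ℤ, gr q 1 m) = (1 - q) / (1 + q) := by
  rw [tsum_gr_zero hq0 hq1, tsum_gr_one hq0 hq1]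
  have h1 : (1 : ℝ) - q ≠ 0 := by linarith
  have h2 : (1 : ℝ) + q ≠ 0 := by linarith
  field_simp
  ring

end

end Theta1Aux

open Theta1Aux in
theorem theta_one_constructionA_binary_dual
    (n : ℕ) (C : Submodule ℤ (Fin n → ZMod 2))
    (q : ℝ) (hq0 : 0 ≤ q) (hq1 : q < 1) :
    (∑' x : {x : Fin n → ℤ //
        ∀ z ∈ C, ∑ i, ((x i : ℤ) : ZMod 2) * z i = 0},
        q ^ (∑ i, (x.val i).natAbs))
      = (1 / (Nat.card C : ℝ)) *
        ∑' c : C,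
          ((1 + q) / (1 - q)) ^ (n - (Finset.univ.filter
              fun i => ((c : Fin n → ZMod 2)) i ≠ 0).card) *
          ((1 - q) / (1 + q)) ^ (Finset.univ.filter
              fun i => ((c : Fin n → ZMod 2)) i ≠ 0).card := by
  classical
  haveI : Fintype C := Fintype.ofFinite _
  set a : ℝ := ∑' m : ℤ, gr q 0 m with ha
  set b : ℝ := ∑' m : ℤ, gr q 1 m with hb
  have ha0 : 0 ≤ a := tsum_nonneg (gr_nonneg hq0 0)
  have hb0 : 0 ≤ b := tsum_nonneg (gr_nonneg hq0 1)
  set t : ZMod 2 → ℝ := fun r => if r = 0 then a else b with ht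
  have htr : ∀ r : ZMod 2, ∑' m : ℤ, gr q r m = t r := by
    intro r
    rcases zmod2_cases r with h | h <;> subst h
    · rw [ht]; norm_num; exact ha.symm
    · rw [ht]; norm_num; exact hb.symm
  have ht0 : ∀ r, 0 ≤ t r := by
    intro r; rcases zmod2_cases r with h | h <;> subst h <;> simp [ht, ha0, hb0]
  set P : (Fin n → ZMod 2) → Prop :=
    fun y => ∀ z ∈ C, ∑ i, y i * z i = 0 with hPdef
  set D : Finset (Fin n → ZMod 2) := Finset.univ.filter P with hD
  set R : ℝ := ∑ y ∈ D, ∏ i, t (y i) with hR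
  have hR0 : 0 ≤ R := Finset.sum_nonneg fun y _ =>
    Finset.prod_nonneg fun i _ => ht0 _
  -- ENNReal version of the lattice sum
  have hEN : (∑' x : {x : Fin n → ℤ //
        ∀ z ∈ C, ∑ i, ((x i : ℤ) : ZMod 2) * z i = 0},
        ENNReal.ofReal (q ^ (∑ i, (x.val i).natAbs)))
      = ENNReal.ofReal R := by
    have step1 : (∑' x : {x : Fin n → ℤ //
          ∀ z ∈ C, ∑ i, ((x i : ℤ) : ZMod 2) * z i = 0},
          ENNReal.ofReal (q ^ (∑ i, (x.val i).natAbs)))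
        = ∑' x : Fin n → ℤ, Set.indicator
            {x : Fin n → ℤ | ∀ z ∈ C, ∑ i, ((x i : ℤ) : ZMod 2) * z i = 0}
            (fun x => ENNReal.ofReal (q ^ (∑ i, (x i).natAbs))) x :=
      _root_.tsum_subtype
        {x : Fin n → ℤ | ∀ z ∈ C, ∑ i, ((x i : ℤ) : ZMod 2) * z i = 0}
        (fun x => ENNReal.ofReal (q ^ (∑ i, (x i).natAbs)))
    rw [step1]
    have step2 : ∀ x : Fin n → ℤ, Set.indicator
            {x : Fin n → ℤ | ∀ z ∈ C, ∑ i, ((x i : ℤ) : ZMod 2) * z i = 0}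
            (fun x => ENNReal.ofReal (q ^ (∑ i, (x i).natAbs))) x
        = ∑ y ∈ D, if (fun i => ((x i : ℤ) : ZMod 2)) = y
            then ENNReal.ofReal (q ^ (∑ i, (x i).natAbs)) else 0 := by
      intro x
      rw [Finset.sum_ite_eq D (fun i => ((x i : ℤ) : ZMod 2))
        (fun _ => ENNReal.ofReal (q ^ (∑ i, (x i).natAbs)))]
      rw [Set.indicator_apply]
      have hmem : ((fun i => ((x i : ℤ) : ZMod 2)) ∈ D)
          ↔ x ∈ {x : Fin n → ℤ | ∀ z ∈ C, ∑ i, ((x i : ℤ) : ZMod 2) * z i = 0} := by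
        rw [hD, Finset.mem_filter]
        simp only [Finset.mem_univ, true_and, Set.mem_setOf_eq, hPdef]
      by_cases h : x ∈ {x : Fin n → ℤ | ∀ z ∈ C, ∑ i, ((x i : ℤ) : ZMod 2) * z i = 0}
      · rw [if_pos h, if_pos (hmem.mpr h)]
      · rw [if_neg h, if_neg (fun hc => h (hmem.mp hc))]
    rw [tsum_congr step2]
    rw [Summable.tsum_finsetSum (fun y _ => ENNReal.summable)]
    have step3 : ∀ y ∈ D, (∑' x : Fin n → ℤ,
        if (fun i => ((x i : ℤ) : ZMod 2)) = y
          then ENNReal.ofReal (q ^ (∑ i, (x i).natAbs)) else 0)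
        = ENNReal.ofReal (∏ i, t (y i)) := by
      intro y _
      have hpt : ∀ x : Fin n → ℤ,
          (if (fun i => ((x i : ℤ) : ZMod 2)) = y
            then ENNReal.ofReal (q ^ (∑ i, (x i).natAbs)) else 0)
          = ∏ i, (if ((x i : ℤ) : ZMod 2) = y i
              then ENNReal.ofReal (q ^ (x i).natAbs) else 0) := by
        intro x
        by_cases h : (fun i => ((x i : ℤ) : ZMod 2)) = y
        · rw [if_pos h]
          have h' : ∀ i, ((x i : ℤ) : ZMod 2) = y i := fun i => congrFun h i
          rw [Finset.prod_congr rfl (fun i _ => if_pos (h' i))]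
          rw [← ENNReal.ofReal_prod_of_nonneg (fun i _ => by positivity)]
          rw [Finset.prod_pow_eq_pow_sum]
        · rw [if_neg h]
          have h' : ¬ ∀ i, ((x i : ℤ) : ZMod 2) = y i := fun hc => h (funext hc)
          push_neg at h'
          obtain ⟨i, hi⟩ := h'
          have hz : (if ((x i : ℤ) : ZMod 2) = y i
              then ENNReal.ofReal (q ^ (x i).natAbs) else (0 : ENNReal)) = 0 := if_neg hi
          exact (Finset.prod_eq_zero (Finset.mem_univ i) hz).symm
      rw [tsum_congr hpt]
      rw [tsum_pi_prod n (fun i m => if ((m : ℤ) : ZMod 2) = y i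
          then ENNReal.ofReal (q ^ m.natAbs) else 0)]
      have hfac : ∀ i : Fin n, (∑' m : ℤ, if ((m : ℤ) : ZMod 2) = y i
          then ENNReal.ofReal (q ^ m.natAbs) else 0) = ENNReal.ofReal (t (y i)) := by
        intro i
        have h1 : ∀ m : ℤ, (if ((m : ℤ) : ZMod 2) = y i
            then ENNReal.ofReal (q ^ m.natAbs) else 0)
            = ENNReal.ofReal (gr q (y i) m) := by
          intro m
          rw [gr]
          split
          · rfl
          · rw [ENNReal.ofReal_zero]
        rw [tsum_congr h1, ← ENNReal.ofReal_tsum_of_nonneg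
          (gr_nonneg hq0 (y i)) (summable_gr hq0 hq1 (y i)), htr]
      rw [Finset.prod_congr rfl (fun i _ => hfac i)]
      rw [← ENNReal.ofReal_prod_of_nonneg (fun i _ => ht0 _)]
    rw [Finset.sum_congr rfl step3]
    rw [← ENNReal.ofReal_sum_of_nonneg
      (fun y _ => Finset.prod_nonneg fun i _ => ht0 _)]
  -- real LHS equals R
  have hLHS : (∑' x : {x : Fin n → ℤ //
        ∀ z ∈ C, ∑ i, ((x i : ℤ) : ZMod 2) * z i = 0},
        q ^ (∑ i, (x.val i).natAbs)) = R := by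
    have h1 : ∀ x : {x : Fin n → ℤ //
        ∀ z ∈ C, ∑ i, ((x i : ℤ) : ZMod 2) * z i = 0},
        q ^ (∑ i, (x.val i).natAbs)
          = (ENNReal.ofReal (q ^ (∑ i, (x.val i).natAbs))).toReal := by
      intro x
      rw [ENNReal.toReal_ofReal (by positivity)]
    rw [tsum_congr h1, ← ENNReal.tsum_toReal_eq (fun x => ENNReal.ofReal_ne_top)]
    rw [hEN, ENNReal.toReal_ofReal hR0]
  rw [hLHS]
  -- finite algebra
  have hcard : (0 : ℝ) < (Nat.card C : ℝ) := by
    have : 0 < Nat.card C := Nat.card_pos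
    exact_mod_cast this
  have hmw := macwilliams n C a b
  have hab : a + b = (1 + q) / (1 - q) := tsum_gr_add hq0 hq1
  have hab' : a - b = (1 - q) / (1 + q) := tsum_gr_sub hq0 hq1
  rw [hab, hab'] at hmw
  rw [tsum_fintype, ← hmw]
  have hc : (Nat.card C : ℝ) ≠ 0 := ne_of_gt hcard
  rw [one_div, inv_mul_cancel_left₀ hc]
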